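/- Let G be a minimal counterexample to the statement that all planar graphs have 3-weak-dynamic number at most 6, chosen with the fewest edges and, among those, the fewest vertices. Then G does not contain a triangle with vertices v_1, v_2, v_3 where d(v_1) = d(v_2) = d(v_3) = 3. -/

import Mathlib

open SimpleGraph

/-- `H` is a minor of `G`: there are nonempty, connected, pairwise disjoint branch sets
in `G`, with an edge of `G` between the branch sets of any two adjacent vertices of `H`. -/
def HasMinor {V W : Type} (G : SimpleGraph V) (H : SimpleGraph W) : Prop :=
  ∃ f : W → Set V,
    (∀ w, (f w).Nonempty) ∧
    (∀ w, (G.induce (f w)).Connected) ∧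
    (∀ w w', w ≠ w' → Disjoint (f w) (f w')) ∧
    (∀ w w', H.Adj w w' → ∃ a ∈ f w, ∃ b ∈ f w', G.Adj a b)

/-- A graph is planar iff it has no `K₅` minor and no `K_{3,3}` minor (Wagner's theorem). -/
def IsPlanar {V : Type} (G : SimpleGraph V) : Prop :=
  ¬ HasMinor G (⊤ : SimpleGraph (Fin 5)) ∧
  ¬ HasMinor G (completeBipartiteGraph (Fin 3) (Fin 3))

/-- The degree of a vertex `v`, the number of its neighbors. -/
noncomputable def deg {V : Type} (G : SimpleGraph V) (v : V) : ℕ :=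
  (G.neighborSet v).ncard

/-- `G` admits a `k`-weak-dynamic coloring with `n` colors: a (not necessarily proper)
coloring such that every vertex `v` sees at least `min k (d v)` colors on its neighborhood. -/
def WDColorable {V : Type} (G : SimpleGraph V) (k n : ℕ) : Prop :=
  ∃ c : V → Fin n, ∀ v, min k (deg G v) ≤ (c '' G.neighborSet v).ncard



namespace WD3

/-- pick an element of `C` avoiding two given elements, if `C` has ≥ 3 elements -/
lemma pick_avoid2 (C : Finset (Fin 6)) (a b : Fin 6) (h : 3 ≤ C.card) :
    ∃ x ∈ C, x ≠ a ∧ x ≠ b := by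
  classical
  have hs : C.card - ({a, b} : Finset (Fin 6)).card ≤ (C \ {a, b}).card :=
    Finset.le_card_sdiff _ _
  have hab : ({a, b} : Finset (Fin 6)).card ≤ 2 := Finset.card_insert_le _ _ |>.trans (by simp)
  obtain ⟨x, hx⟩ := Finset.card_pos.mp (show 0 < (C \ {a,b}).card by omega)
  rw [Finset.mem_sdiff] at hx
  refine ⟨x, hx.1, ?_, ?_⟩ <;> · intro h'; apply hx.2; simp [h']

lemma pick_avoid1 (C : Finset (Fin 6)) (a : Fin 6) (h : 2 ≤ C.card) :
    ∃ x ∈ C, x ≠ a := by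
  classical
  have hs : C.card - ({a} : Finset (Fin 6)).card ≤ (C \ {a}).card := Finset.le_card_sdiff _ _
  obtain ⟨x, hx⟩ := Finset.card_pos.mp (show 0 < (C \ {a}).card by simp at hs; omega)
  rw [Finset.mem_sdiff] at hx
  exact ⟨x, hx.1, by intro h'; apply hx.2; simp [h']⟩

lemma pick_mem (C : Finset (Fin 6)) (h : 1 ≤ C.card) : ∃ x, x ∈ C :=
  Finset.card_pos.mp h

/-- pick an element outside a finset with at most 5 elements -/
lemma pick1 (F : Finset (Fin 6)) (h : F.card ≤ 5) : ∃ x, x ∉ F := by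
  classical
  have := Finset.card_compl F (α := Fin 6)
  rw [Fintype.card_fin] at this
  obtain ⟨x, hx⟩ := Finset.card_pos.mp (show 0 < Fᶜ.card by omega)
  exact ⟨x, Finset.mem_compl.mp hx⟩

lemma pick2 (F : Finset (Fin 6)) (h : F.card ≤ 4) : ∃ x y, x ≠ y ∧ x ∉ F ∧ y ∉ F := by
  classical
  have := Finset.card_compl F (α := Fin 6)
  rw [Fintype.card_fin] at this
  obtain ⟨x, hx, hxa⟩ := pick_avoid1 Fᶜ 0 (by omega)
  obtain ⟨y, hy, hya⟩ := pick_avoid1 Fᶜ x (by omega)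
  exact ⟨y, x, hya, Finset.mem_compl.mp hy, Finset.mem_compl.mp hx⟩

lemma pick3 (F : Finset (Fin 6)) (h : F.card ≤ 3) :
    ∃ x y z, x ≠ y ∧ x ≠ z ∧ y ≠ z ∧ x ∉ F ∧ y ∉ F ∧ z ∉ F := by
  classical
  have := Finset.card_compl F (α := Fin 6)
  rw [Fintype.card_fin] at this
  obtain ⟨x, hx⟩ := pick_mem Fᶜ (by omega)
  obtain ⟨y, hy, hyx⟩ := pick_avoid1 Fᶜ x (by omega)
  obtain ⟨z, hz, hzx, hzy⟩ := pick_avoid2 Fᶜ x y (by omega)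
  exact ⟨x, y, z, hyx.symm, hzx.symm, hzy.symm,
    Finset.mem_compl.mp hx, Finset.mem_compl.mp hy, Finset.mem_compl.mp hz⟩

end WD3

namespace WD3

lemma sdr3 (C1 C2 C3 : Finset (Fin 6)) (h1 : 2 ≤ C1.card) (h2 : 2 ≤ C2.card)
    (h3 : 2 ≤ C3.card) (hno : ¬ (C1 = C2 ∧ C2 = C3 ∧ C1.card = 2)) :
    ∃ x1 x2 x3, x1 ∈ C1 ∧ x2 ∈ C2 ∧ x3 ∈ C3 ∧ x1 ≠ x2 ∧ x1 ≠ x3 ∧ x2 ≠ x3 := by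
  classical
  by_cases hb1 : 3 ≤ C1.card
  · obtain ⟨x2, hx2⟩ := pick_mem C2 (by omega)
    obtain ⟨x3, hx3, h32⟩ := pick_avoid1 C3 x2 h3
    obtain ⟨x1, hx1, h12, h13⟩ := pick_avoid2 C1 x2 x3 hb1
    exact ⟨x1, x2, x3, hx1, hx2, hx3, h12, h13, h32.symm⟩
  by_cases hb2 : 3 ≤ C2.card
  · obtain ⟨x1, hx1⟩ := pick_mem C1 (by omega)
    obtain ⟨x3, hx3, h31⟩ := pick_avoid1 C3 x1 h3
    obtain ⟨x2, hx2, h21, h23⟩ := pick_avoid2 C2 x1 x3 hb2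
    exact ⟨x1, x2, x3, hx1, hx2, hx3, h21.symm, h31.symm, h23⟩
  by_cases hb3 : 3 ≤ C3.card
  · obtain ⟨x1, hx1⟩ := pick_mem C1 (by omega)
    obtain ⟨x2, hx2, h21⟩ := pick_avoid1 C2 x1 h2
    obtain ⟨x3, hx3, h31, h32⟩ := pick_avoid2 C3 x1 x2 hb3
    exact ⟨x1, x2, x3, hx1, hx2, hx3, h21.symm, h31.symm, h32.symm⟩
  have e1 : C1.card = 2 := by omega
  have e2 : C2.card = 2 := by omega
  have e3 : C3.card = 2 := by omega
  by_cases h12 : C1 = C2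
  · have h23 : C2 ≠ C3 := fun h => hno ⟨h12, h, e1⟩
    have hns : ¬ C3 ⊆ C2 := fun hsub => h23 (Finset.eq_of_subset_of_card_le hsub (by omega)).symm
    obtain ⟨t, ht3, ht2⟩ := Finset.not_subset.mp hns
    obtain ⟨x1, hx1⟩ := pick_mem C1 (by omega)
    obtain ⟨x2, hx2, h21⟩ := pick_avoid1 C2 x1 h2
    have ht1 : t ∉ C1 := by rw [h12]; exact ht2
    exact ⟨x1, x2, t, hx1, hx2, ht3, h21.symm,
      fun h => ht1 (h ▸ hx1), fun h => ht2 (h ▸ hx2)⟩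
  · have hns : ¬ C2 ⊆ C1 := fun hsub => h12 (Finset.eq_of_subset_of_card_le hsub (by omega)).symm
    obtain ⟨t, ht2, ht1⟩ := Finset.not_subset.mp hns
    obtain ⟨w, hw3, hwt⟩ := pick_avoid1 C3 t h3
    obtain ⟨x1, hx1, h1w⟩ := pick_avoid1 C1 w h1
    exact ⟨x1, t, w, hx1, ht2, hw3, fun h => ht1 (h ▸ hx1), h1w, hwt.symm⟩

lemma sel3 (z1 z2 z3 : Fin 6) (D1 D2 D3 : Finset (Fin 6))
    (hD1 : D1.card ≤ 2) (hD2 : D2.card ≤ 2) (hD3 : D3.card ≤ 2) :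
    (∃ x1 x2 x3 : Fin 6, x1 ≠ x2 ∧ x1 ≠ x3 ∧ x2 ≠ x3 ∧ x1 ∉ D1 ∧ x2 ∉ D2 ∧ x3 ∉ D3 ∧
      x1 ≠ z2 ∧ x1 ≠ z3 ∧ x2 ≠ z1 ∧ x2 ≠ z3 ∧ x3 ≠ z1 ∧ x3 ≠ z2) ∨
    (z1 ≠ z2 ∧ z1 ≠ z3 ∧ z2 ≠ z3 ∧ ∃ r, r ≠ z1 ∧ r ≠ z2 ∧ r ≠ z3 ∧
      D1 = {z1, r} ∧ D2 = {z2, r} ∧ D3 = {z3, r}) := by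
  classical
  set F1 : Finset (Fin 6) := {z2, z3} ∪ D1 with hF1
  set F2 : Finset (Fin 6) := {z1, z3} ∪ D2 with hF2
  set F3 : Finset (Fin 6) := {z1, z2} ∪ D3 with hF3
  have hF1c : F1.card ≤ 4 := by
    calc F1.card ≤ ({z2, z3} : Finset (Fin 6)).card + D1.card := Finset.card_union_le _ _
    _ ≤ 4 := by have : ({z2, z3} : Finset (Fin 6)).card ≤ 2 :=
                  (Finset.card_insert_le _ _).trans (by simp)
                omega
  have hF2c : F2.card ≤ 4 := by
    calc F2.card ≤ ({z1, z3} : Finset (Fin 6)).card + D2.card := Finset.card_union_le _ _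
    _ ≤ 4 := by have : ({z1, z3} : Finset (Fin 6)).card ≤ 2 :=
                  (Finset.card_insert_le _ _).trans (by simp)
                omega
  have hF3c : F3.card ≤ 4 := by
    calc F3.card ≤ ({z1, z2} : Finset (Fin 6)).card + D3.card := Finset.card_union_le _ _
    _ ≤ 4 := by have : ({z1, z2} : Finset (Fin 6)).card ≤ 2 :=
                  (Finset.card_insert_le _ _).trans (by simp)
                omega
  have hc1 : 2 ≤ F1ᶜ.card := by
    have := Finset.card_compl F1 (α := Fin 6); rw [Fintype.card_fin] at this; omega
  have hc2 : 2 ≤ F2ᶜ.card := by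
    have := Finset.card_compl F2 (α := Fin 6); rw [Fintype.card_fin] at this; omega
  have hc3 : 2 ≤ F3ᶜ.card := by
    have := Finset.card_compl F3 (α := Fin 6); rw [Fintype.card_fin] at this; omega
  by_cases hall : F1ᶜ = F2ᶜ ∧ F2ᶜ = F3ᶜ ∧ F1ᶜ.card = 2
  · right
    obtain ⟨hq12, hq23, hqc⟩ := hall
    have hFe12 : F1 = F2 := by
      have := congrArg compl hq12; simpa using this
    have hFe23 : F2 = F3 := by
      have := congrArg compl hq23; simpa using this
    have h4 : F1.card = 4 := by
      have := Finset.card_compl F1 (α := Fin 6); rw [Fintype.card_fin] at this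
      have h6 : F1.card ≤ 6 := hF1c.trans (by omega)
      omega
    -- for each i derive: pair distinct, Di.card = 2, disjointness
    have key : ∀ (a b : Fin 6) (D : Finset (Fin 6)), D.card ≤ 2 → ({a, b} ∪ D).card = 4 →
        a ≠ b ∧ D.card = 2 ∧ ({a, b} : Finset (Fin 6)) ∩ D = ∅ := by
      intro a b D hD hcard
      have hpair : ({a, b} : Finset (Fin 6)).card ≤ 2 := (Finset.card_insert_le _ _).trans (by simp)
      have hsum := Finset.card_union_add_card_inter ({a, b} : Finset (Fin 6)) D
      have hinter : (({a, b} : Finset (Fin 6)) ∩ D).card = 0 := by omega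
      have hpair2 : ({a, b} : Finset (Fin 6)).card = 2 := by omega
      refine ⟨?_, by omega, Finset.card_eq_zero.mp hinter⟩
      intro hab
      rw [hab] at hpair2
      simp at hpair2
    obtain ⟨hz23, hD1c, hdisj1⟩ := key z2 z3 D1 hD1 h4
    obtain ⟨hz13, hD2c, hdisj2⟩ := key z1 z3 D2 hD2 (by rw [← hF2, ← hFe12]; exact h4)
    obtain ⟨hz12, hD3c, hdisj3⟩ := key z1 z2 D3 hD3 (by rw [← hF3, ← hFe23, ← hFe12]; exact h4)
    refine ⟨hz12, hz13, hz23, ?_⟩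
    -- z1 ∈ D1
    have hz1F1 : z1 ∈ F1 := by rw [hFe12, hF2]; simp
    have hz1D1 : z1 ∈ D1 := by
      rw [hF1] at hz1F1
      rcases Finset.mem_union.mp hz1F1 with h | h
      · simp at h; rcases h with h | h
        · exact absurd h hz12
        · exact absurd h hz13
      · exact h
    obtain ⟨p, q, hpq, hD1eq⟩ := Finset.card_eq_two.mp hD1c
    -- r := the element of D1 other than z1
    have hz1pq : z1 = p ∨ z1 = q := by
      have := hD1eq ▸ hz1D1; simpa using this
    obtain ⟨r, hD1r, hrz1⟩ : ∃ r, D1 = {z1, r} ∧ r ≠ z1 := by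
      rcases hz1pq with h | h
      · subst h; exact ⟨q, by rw [hD1eq], hpq.symm⟩
      · subst h; exact ⟨p, by rw [hD1eq, Finset.pair_comm], hpq⟩
    have hrD1 : r ∈ D1 := by rw [hD1r]; simp
    have hrz2 : r ≠ z2 := by
      intro h; have : z2 ∈ ({z2, z3} : Finset (Fin 6)) ∩ D1 := by
        simp [Finset.mem_inter]; exact h ▸ hrD1
      rw [hdisj1] at this; simp at this
    have hrz3 : r ≠ z3 := by
      intro h; have : z3 ∈ ({z2, z3} : Finset (Fin 6)) ∩ D1 := by
        simp [Finset.mem_inter]; exact h ▸ hrD1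
      rw [hdisj1] at this; simp at this
    refine ⟨r, hrz1, hrz2, hrz3, hD1r, ?_, ?_⟩
    · -- D2 = {z2, r}
      have hz2D2 : z2 ∈ D2 := by
        have : z2 ∈ F2 := by rw [← hFe12, hF1]; simp
        rw [hF2] at this
        rcases Finset.mem_union.mp this with h | h
        · simp at h; rcases h with h | h
          · exact absurd h.symm hz12
          · exact absurd h hz23
        · exact h
      obtain ⟨p2, q2, hpq2, hD2eq⟩ := Finset.card_eq_two.mp hD2c
      have hz2pq : z2 = p2 ∨ z2 = q2 := by
        have := hD2eq ▸ hz2D2; simpa using this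
      obtain ⟨r2, hD2r, hr2z2⟩ : ∃ r2, D2 = {z2, r2} ∧ r2 ≠ z2 := by
        rcases hz2pq with h | h
        · subst h; exact ⟨q2, by rw [hD2eq], hpq2.symm⟩
        · subst h; exact ⟨p2, by rw [hD2eq, Finset.pair_comm], hpq2⟩
      have hr2D2 : r2 ∈ D2 := by rw [hD2r]; simp
      have hr2z1 : r2 ≠ z1 := by
        intro h; have : z1 ∈ ({z1, z3} : Finset (Fin 6)) ∩ D2 := by
          simp [Finset.mem_inter]; exact h ▸ hr2D2
        rw [hdisj2] at this; simp at this
      have hr2z3 : r2 ≠ z3 := by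
        intro h; have : z3 ∈ ({z1, z3} : Finset (Fin 6)) ∩ D2 := by
          simp [Finset.mem_inter]; exact h ▸ hr2D2
        rw [hdisj2] at this; simp at this
      -- r2 ∈ F2 = F1 = {z2,z3} ∪ {z1, r}
      have hr2F1 : r2 ∈ F1 := by rw [hFe12, hF2]; simp [hr2D2]
      have : r2 = r := by
        rw [hF1, hD1r] at hr2F1
        rcases Finset.mem_union.mp hr2F1 with h | h
        · simp at h; rcases h with h | h
          · exact absurd h hr2z2
          · exact absurd h hr2z3
        · simp at h; rcases h with h | h
          · exact absurd h hr2z1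
          · exact h
      rw [hD2r, this]
    · -- D3 = {z3, r}
      have hz3D3 : z3 ∈ D3 := by
        have : z3 ∈ F3 := by rw [← hFe23, hF2]; simp
        rw [hF3] at this
        rcases Finset.mem_union.mp this with h | h
        · simp at h; rcases h with h | h
          · exact absurd h.symm hz13
          · exact absurd h.symm hz23
        · exact h
      obtain ⟨p3, q3, hpq3, hD3eq⟩ := Finset.card_eq_two.mp hD3c
      have hz3pq : z3 = p3 ∨ z3 = q3 := by
        have := hD3eq ▸ hz3D3; simpa using this
      obtain ⟨r3, hD3r, hr3z3⟩ : ∃ r3, D3 = {z3, r3} ∧ r3 ≠ z3 := by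
        rcases hz3pq with h | h
        · subst h; exact ⟨q3, by rw [hD3eq], hpq3.symm⟩
        · subst h; exact ⟨p3, by rw [hD3eq, Finset.pair_comm], hpq3⟩
      have hr3D3 : r3 ∈ D3 := by rw [hD3r]; simp
      have hr3z1 : r3 ≠ z1 := by
        intro h; have : z1 ∈ ({z1, z2} : Finset (Fin 6)) ∩ D3 := by
          simp [Finset.mem_inter]; exact h ▸ hr3D3
        rw [hdisj3] at this; simp at this
      have hr3z2 : r3 ≠ z2 := by
        intro h; have : z2 ∈ ({z1, z2} : Finset (Fin 6)) ∩ D3 := by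
          simp [Finset.mem_inter]; exact h ▸ hr3D3
        rw [hdisj3] at this; simp at this
      have hr3F1 : r3 ∈ F1 := by rw [hFe12, hFe23, hF3]; simp [hr3D3]
      have : r3 = r := by
        rw [hF1, hD1r] at hr3F1
        rcases Finset.mem_union.mp hr3F1 with h | h
        · simp at h; rcases h with h | h
          · exact absurd h hr3z2
          · exact absurd h hr3z3
        · simp at h; rcases h with h | h
          · exact absurd h hr3z1
          · exact h
      rw [hD3r, this]
  · left
    obtain ⟨x1, x2, x3, hx1, hx2, hx3, h12, h13, h23⟩ :=
      sdr3 F1ᶜ F2ᶜ F3ᶜ hc1 hc2 hc3 hall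
    rw [Finset.mem_compl, hF1] at hx1
    rw [Finset.mem_compl, hF2] at hx2
    rw [Finset.mem_compl, hF3] at hx3
    simp only [Finset.mem_union, Finset.mem_insert, Finset.mem_singleton, not_or] at hx1 hx2 hx3
    exact ⟨x1, x2, x3, h12, h13, h23, hx1.2, hx2.2, hx3.2,
      hx1.1.1, hx1.1.2, hx2.1.1, hx2.1.2, hx3.1.1, hx3.1.2⟩

end WD3

namespace WD3

variable {V : Type}

/-- the graph obtained from `G` by deleting all edges incident to `T` -/
def Hdel (G : SimpleGraph V) (T : Set V) : SimpleGraph V where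
  Adj a b := G.Adj a b ∧ a ∉ T ∧ b ∉ T
  symm := by
    constructor
    rintro a b ⟨h, ha, hb⟩
    exact ⟨h.symm, hb, ha⟩
  loopless := by
    constructor
    rintro a ⟨h, -, -⟩
    exact G.loopless.irrefl a h

lemma Hdel_le (G : SimpleGraph V) (T : Set V) : Hdel G T ≤ G := by
  rintro a b ⟨h, -, -⟩
  exact h

lemma hasMinor_mono {W : Type} {G G' : SimpleGraph V} (hle : G ≤ G') {K : SimpleGraph W} :
    HasMinor G K → HasMinor G' K := by
  rintro ⟨f, h1, h2, h3, h4⟩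
  refine ⟨f, h1, fun w => (h2 w).mono (fun a b hab => hle hab), h3, fun w w' ha => ?_⟩
  obtain ⟨a, haf, b, hbf, hab⟩ := h4 w w' ha
  exact ⟨a, haf, b, hbf, hle hab⟩

lemma isPlanar_mono {G G' : SimpleGraph V} (hle : G ≤ G') (h : IsPlanar G') : IsPlanar G :=
  ⟨fun hm => h.1 (hasMinor_mono hle hm), fun hm => h.2 (hasMinor_mono hle hm)⟩

lemma Hdel_edge_lt [Fintype V] (G : SimpleGraph V) (T : Set V) {v1 v2 : V}
    (h12 : G.Adj v1 v2) (hv1 : v1 ∈ T) :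
    (Hdel G T).edgeSet.ncard < G.edgeSet.ncard := by
  apply Set.ncard_lt_ncard _ (Set.toFinite _)
  refine (Set.ssubset_iff_of_subset (SimpleGraph.edgeSet_mono (Hdel_le G T))).mpr ?_
  refine ⟨s(v1, v2), (G.mem_edgeSet).mpr h12, fun hmem => ?_⟩
  exact ((Hdel G T).mem_edgeSet.mp hmem).2.1 hv1

lemma Hdel_nbr (G : SimpleGraph V) (T : Set V) (w : V) (hw : w ∉ T) :
    (Hdel G T).neighborSet w = G.neighborSet w \ T := by
  ext x
  simp only [SimpleGraph.mem_neighborSet, Set.mem_diff]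
  exact ⟨fun ⟨h, _, hx⟩ => ⟨h, hx⟩, fun ⟨h, hx⟩ => ⟨h, hw, hx⟩⟩

lemma ncard3 {α : Type*} {a b c : α} (h1 : a ≠ b) (h2 : a ≠ c) (h3 : b ≠ c) :
    ({a, b, c} : Set α).ncard = 3 :=
  Set.ncard_eq_three.mpr ⟨a, b, c, h1, h2, h3, rfl⟩

lemma nbrSet_eq (G : SimpleGraph V) (v1 v2 v3 u1 : V)
    (hN1 : ∀ w, G.Adj v1 w ↔ (w = v2 ∨ w = v3 ∨ w = u1)) :
    G.neighborSet v1 = {v2, v3, u1} := by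
  ext w
  simp only [SimpleGraph.mem_neighborSet, Set.mem_insert_iff, Set.mem_singleton_iff, hN1 w]

/-- any vertex away from the triangle and the `uᵢ`'s has no neighbor in the triangle -/
lemma untouched_nbrs (G : SimpleGraph V) (T : Set V) (v1 v2 v3 u1 u2 u3 : V)
    (hT : ∀ x, x ∈ T ↔ (x = v1 ∨ x = v2 ∨ x = v3))
    (hN1 : ∀ w, G.Adj v1 w ↔ (w = v2 ∨ w = v3 ∨ w = u1))
    (hN2 : ∀ w, G.Adj v2 w ↔ (w = v1 ∨ w = v3 ∨ w = u2))
    (hN3 : ∀ w, G.Adj v3 w ↔ (w = v1 ∨ w = v2 ∨ w = u3))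
    (w : V) (hw : w ∉ T) (h1 : w ≠ u1) (h2 : w ≠ u2) (h3 : w ≠ u3) :
    ∀ x ∈ G.neighborSet w, x ∉ T := by
  intro x hx hxT
  rw [SimpleGraph.mem_neighborSet] at hx
  rcases (hT x).mp hxT with h | h | h
  · subst h
    rcases (hN1 w).mp hx.symm with h | h | h
    · exact hw ((hT w).mpr (Or.inr (Or.inl h)))
    · exact hw ((hT w).mpr (Or.inr (Or.inr h)))
    · exact h1 h
  · subst h
    rcases (hN2 w).mp hx.symm with h | h | h
    · exact hw ((hT w).mpr (Or.inl h))
    · exact hw ((hT w).mpr (Or.inr (Or.inr h)))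
    · exact h2 h
  · subst h
    rcases (hN3 w).mp hx.symm with h | h | h
    · exact hw ((hT w).mpr (Or.inl h))
    · exact hw ((hT w).mpr (Or.inr (Or.inl h)))
    · exact h3 h

/-- transfer of the coloring condition at a vertex not involved in the recoloring -/
lemma transfer (G : SimpleGraph V) (T : Set V) (c c' : V → Fin 6) (w : V) (hw : w ∉ T)
    (hnb : ∀ x ∈ G.neighborSet w, x ∉ T)
    (heq : ∀ x ∈ G.neighborSet w, c' x = c x)
    (hc : min 3 (deg (Hdel G T) w) ≤ (c '' (Hdel G T).neighborSet w).ncard) :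
    min 3 (deg G w) ≤ (c' '' G.neighborSet w).ncard := by
  have hN : (Hdel G T).neighborSet w = G.neighborSet w := by
    rw [Hdel_nbr G T w hw]
    ext x
    simp only [Set.mem_diff]
    exact ⟨fun h => h.1, fun h => ⟨h, hnb x h⟩⟩
  rw [deg, hN] at hc
  rw [deg]
  rwa [Set.image_congr heq]

lemma min3_sub (m d : ℕ) (h : m = min 3 (d - 1)) (k : ℕ) (hk : k = min 3 d) : k - 1 ≤ m := by
  omega

end WD3

namespace WD3

lemma minb2 (d n : ℕ) (h : min 3 (d - 2) ≤ n) : min 3 d ≤ n + 2 := by omega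

lemma minb1 (d n : ℕ) (h : min 3 (d - 1) ≤ n) : min 3 d ≤ n + 1 := by omega

lemma le2_of_not_le (m n : ℕ) (hm : m ≤ 3) (h : ¬ m ≤ n) : n ≤ 2 := by omega

end WD3

namespace WD3

lemma deg_eq_3 (d : ℕ) (h1 : ¬ min 3 d ≤ 2) (h2 : min 3 (d - 1) ≤ 2) : d = 3 := by omega

end WD3

namespace WD3

/-- The data available after deleting the edges at a degree-3 triangle `v1 v2 v3`
of `G` (with third neighbors `u1, u2, u3`) and coloring the resulting graph. -/
structure Setup (V : Type) where
  G : SimpleGraph V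
  T : Set V
  c : V → Fin 6
  v1 : V
  v2 : V
  v3 : V
  u1 : V
  u2 : V
  u3 : V
  hT : ∀ x, x ∈ T ↔ (x = v1 ∨ x = v2 ∨ x = v3)
  hN1 : ∀ w, G.Adj v1 w ↔ (w = v2 ∨ w = v3 ∨ w = u1)
  hN2 : ∀ w, G.Adj v2 w ↔ (w = v1 ∨ w = v3 ∨ w = u2)
  hN3 : ∀ w, G.Adj v3 w ↔ (w = v1 ∨ w = v2 ∨ w = u3)
  h12 : G.Adj v1 v2
  h13 : G.Adj v1 v3
  h23 : G.Adj v2 v3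
  hu1 : u1 ∉ T
  hu2 : u2 ∉ T
  hu3 : u3 ∉ T
  hc : ∀ w, min 3 (deg (Hdel G T) w) ≤ ((c '' (Hdel G T).neighborSet w)).ncard

namespace Setup

variable {V : Type} (S : Setup V)

/-- swap the roles of `v2` and `v3` -/
def swap23 : Setup V where
  G := S.G
  T := S.T
  c := S.c
  v1 := S.v1
  v2 := S.v3
  v3 := S.v2
  u1 := S.u1
  u2 := S.u3
  u3 := S.u2
  hT := fun x => by have := S.hT x; tauto
  hN1 := fun w => by have := S.hN1 w; tauto
  hN2 := fun w => by have := S.hN3 w; tauto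
  hN3 := fun w => by have := S.hN2 w; tauto
  h12 := S.h13
  h13 := S.h12
  h23 := S.h23.symm
  hu1 := S.hu1
  hu2 := S.hu3
  hu3 := S.hu2
  hc := S.hc

/-- cyclically rotate the roles of `v1, v2, v3` -/
def rot : Setup V where
  G := S.G
  T := S.T
  c := S.c
  v1 := S.v2
  v2 := S.v3
  v3 := S.v1
  u1 := S.u2
  u2 := S.u3
  u3 := S.u1
  hT := fun x => by have := S.hT x; tauto
  hN1 := fun w => by have := S.hN2 w; tauto
  hN2 := fun w => by have := S.hN3 w; tauto
  hN3 := fun w => by have := S.hN1 w; tauto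
  h12 := S.h23
  h13 := S.h12.symm
  h23 := S.h13.symm
  hu1 := S.hu2
  hu2 := S.hu3
  hu3 := S.hu1
  hc := S.hc

lemma v1T : S.v1 ∈ S.T := (S.hT _).mpr (Or.inl rfl)
lemma v2T : S.v2 ∈ S.T := (S.hT _).mpr (Or.inr (Or.inl rfl))
lemma v3T : S.v3 ∈ S.T := (S.hT _).mpr (Or.inr (Or.inr rfl))

lemma ne12 : S.v1 ≠ S.v2 := S.h12.ne
lemma ne13 : S.v1 ≠ S.v3 := S.h13.ne
lemma ne23 : S.v2 ≠ S.v3 := S.h23.ne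

lemma u1v1 : S.u1 ≠ S.v1 := fun h => S.hu1 ((S.hT _).mpr (Or.inl h))
lemma u1v2 : S.u1 ≠ S.v2 := fun h => S.hu1 ((S.hT _).mpr (Or.inr (Or.inl h)))
lemma u1v3 : S.u1 ≠ S.v3 := fun h => S.hu1 ((S.hT _).mpr (Or.inr (Or.inr h)))
lemma u2v1 : S.u2 ≠ S.v1 := fun h => S.hu2 ((S.hT _).mpr (Or.inl h))
lemma u2v2 : S.u2 ≠ S.v2 := fun h => S.hu2 ((S.hT _).mpr (Or.inr (Or.inl h)))
lemma u2v3 : S.u2 ≠ S.v3 := fun h => S.hu2 ((S.hT _).mpr (Or.inr (Or.inr h)))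
lemma u3v1 : S.u3 ≠ S.v1 := fun h => S.hu3 ((S.hT _).mpr (Or.inl h))
lemma u3v2 : S.u3 ≠ S.v2 := fun h => S.hu3 ((S.hT _).mpr (Or.inr (Or.inl h)))
lemma u3v3 : S.u3 ≠ S.v3 := fun h => S.hu3 ((S.hT _).mpr (Or.inr (Or.inr h)))

lemma adj_v1u1 : S.G.Adj S.v1 S.u1 := (S.hN1 _).mpr (Or.inr (Or.inr rfl))
lemma adj_v2u2 : S.G.Adj S.v2 S.u2 := (S.hN2 _).mpr (Or.inr (Or.inr rfl))
lemma adj_v3u3 : S.G.Adj S.v3 S.u3 := (S.hN3 _).mpr (Or.inr (Or.inr rfl))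

lemma Nv1 : S.G.neighborSet S.v1 = {S.v2, S.v3, S.u1} := nbrSet_eq _ _ _ _ _ S.hN1
lemma Nv2 : S.G.neighborSet S.v2 = {S.v1, S.v3, S.u2} := nbrSet_eq _ _ _ _ _ S.hN2
lemma Nv3 : S.G.neighborSet S.v3 = {S.v1, S.v2, S.u3} := nbrSet_eq _ _ _ _ _ S.hN3

lemma degv1 : deg S.G S.v1 = 3 := by
  rw [deg, S.Nv1]; exact ncard3 S.ne23 (S.u1v2).symm (S.u1v3).symm
lemma degv2 : deg S.G S.v2 = 3 := by
  rw [deg, S.Nv2]; exact ncard3 S.ne13 (S.u2v1).symm (S.u2v3).symm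
lemma degv3 : deg S.G S.v3 = 3 := by
  rw [deg, S.Nv3]; exact ncard3 S.ne12 (S.u3v1).symm (S.u3v2).symm

lemma untouched (w : V) (hw : w ∉ S.T) (h1 : w ≠ S.u1) (h2 : w ≠ S.u2) (h3 : w ≠ S.u3) :
    ∀ x ∈ S.G.neighborSet w, x ∉ S.T :=
  untouched_nbrs S.G S.T S.v1 S.v2 S.v3 S.u1 S.u2 S.u3 S.hT S.hN1 S.hN2 S.hN3 w hw h1 h2 h3

end Setup

end WD3

namespace WD3

namespace Setup

variable {V : Type} (S : Setup V)

lemma caseI (e12 : S.u1 = S.u2) (e23 : S.u2 = S.u3) : WDColorable S.G 3 6 := by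
  classical
  obtain ⟨x1, x2, x3, hx12, hx13, hx23, hm1, hm2, hm3⟩ :=
    pick3 {S.c S.u1} (by simp)
  rw [Finset.mem_singleton] at hm1 hm2 hm3
  set c' : V → Fin 6 :=
    fun w => if w = S.v1 then x1 else if w = S.v2 then x2 else if w = S.v3 then x3 else S.c w
    with hc'
  have ev1 : c' S.v1 = x1 := by simp [hc']
  have ev2 : c' S.v2 = x2 := by simp [hc', S.ne12.symm]
  have ev3 : c' S.v3 = x3 := by simp [hc', S.ne13.symm, S.ne23.symm]
  have evo : ∀ x, x ≠ S.v1 → x ≠ S.v2 → x ≠ S.v3 → c' x = S.c x := by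
    intro x hx1' hx2' hx3'; simp [hc', hx1', hx2', hx3']
  have evu1 : c' S.u1 = S.c S.u1 := evo _ S.u1v1 S.u1v2 S.u1v3
  refine ⟨c', fun w => ?_⟩
  by_cases hw1 : w = S.v1
  · subst hw1
    rw [S.degv1, S.Nv1, Set.image_insert_eq, Set.image_insert_eq, Set.image_singleton,
      ev2, ev3, evu1]
    rw [ncard3 hx23 hm2 hm3]
    simp
  by_cases hw2 : w = S.v2
  · subst hw2
    rw [S.degv2, S.Nv2, Set.image_insert_eq, Set.image_insert_eq, Set.image_singleton,
      ev1, ev3]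
    have : c' S.u2 = S.c S.u1 := by rw [← e12, evu1]
    rw [this, ncard3 hx13 hm1 hm3]
    simp
  by_cases hw3 : w = S.v3
  · subst hw3
    rw [S.degv3, S.Nv3, Set.image_insert_eq, Set.image_insert_eq, Set.image_singleton,
      ev1, ev2]
    have : c' S.u3 = S.c S.u1 := by rw [← e23, ← e12, evu1]
    rw [this, ncard3 hx12 hm1 hm2]
    simp
  by_cases hwu : w = S.u1
  · subst hwu
    have hsub : ({x1, x2, x3} : Set (Fin 6)) ⊆ c' '' S.G.neighborSet S.u1 := by
      intro y hy
      rcases hy with h | h | h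
      · exact ⟨S.v1, S.adj_v1u1.symm, by rw [ev1, h]⟩
      · exact ⟨S.v2, by rw [e12]; exact (S.adj_v2u2.symm), by rw [ev2]; exact h.symm⟩
      · exact ⟨S.v3, by rw [e12, e23]; exact (S.adj_v3u3.symm), by rw [ev3]; exact (Set.mem_singleton_iff.mp h).symm⟩
    calc min 3 (deg S.G S.u1) ≤ 3 := min_le_left _ _
    _ = ({x1, x2, x3} : Set (Fin 6)).ncard := (ncard3 hx12 hx13 hx23).symm
    _ ≤ (c' '' S.G.neighborSet S.u1).ncard := Set.ncard_le_ncard hsub (Set.toFinite _)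
  · -- untouched vertex
    have hwT : w ∉ S.T := by
      intro h; rcases (S.hT w).mp h with h | h | h
      exacts [hw1 h, hw2 h, hw3 h]
    have hwu2 : w ≠ S.u2 := by rw [← e12]; exact hwu
    have hwu3 : w ≠ S.u3 := by rw [← e23, ← e12]; exact hwu
    have hnb := S.untouched w hwT hwu hwu2 hwu3
    refine transfer S.G S.T S.c c' w hwT hnb (fun x hx => ?_) (S.hc w)
    have hxT := hnb x hx
    exact evo x (fun h => hxT (h ▸ S.v1T)) (fun h => hxT (h ▸ S.v2T)) (fun h => hxT (h ▸ S.v3T))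

end Setup

end WD3

namespace WD3

namespace Setup

variable {V : Type} [Fintype V] (S : Setup V)

set_option maxHeartbeats 1000000 in
lemma caseII (e12 : S.u1 = S.u2) (e13 : S.u1 ≠ S.u3) : WDColorable S.G 3 6 := by
  classical
  obtain ⟨z, hz⟩ : ∃ x : Fin 6, x = S.c S.u1 := ⟨_, rfl⟩
  obtain ⟨z3, hz3⟩ : ∃ x : Fin 6, x = S.c S.u3 := ⟨_, rfl⟩
  -- u1 is not adjacent to v3, u3 is not adjacent to v1 or v2
  have hu1v3 : ¬ S.G.Adj S.u1 S.v3 := by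
    intro h
    rcases (S.hN3 S.u1).mp h.symm with h' | h' | h'
    exacts [S.u1v1 h', S.u1v2 h', e13 h']
  have hu3v1 : ¬ S.G.Adj S.u3 S.v1 := by
    intro h
    rcases (S.hN1 S.u3).mp h.symm with h' | h' | h'
    exacts [S.u3v2 h', S.u3v3 h', e13 h'.symm]
  have hu3v2 : ¬ S.G.Adj S.u3 S.v2 := by
    intro h
    rcases (S.hN2 S.u3).mp h.symm with h' | h' | h'
    exacts [S.u3v1 h', S.u3v3 h', e13 (e12.trans h'.symm)]
  -- neighborhoods in H
  have hNHu : (Hdel S.G S.T).neighborSet S.u1 = S.G.neighborSet S.u1 \ S.T :=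
    Hdel_nbr _ _ _ S.hu1
  have hNHu3 : (Hdel S.G S.T).neighborSet S.u3 = S.G.neighborSet S.u3 \ S.T :=
    Hdel_nbr _ _ _ S.hu3
  have hv1Nu : S.v1 ∈ S.G.neighborSet S.u1 := S.adj_v1u1.symm
  have hv2Nu : S.v2 ∈ S.G.neighborSet S.u1 := by
    have := S.adj_v2u2.symm; rw [← e12] at this; exact this
  have hv3Nu3 : S.v3 ∈ S.G.neighborSet S.u3 := S.adj_v3u3.symm
  have hdiff : S.G.neighborSet S.u1 \ S.T = (S.G.neighborSet S.u1 \ {S.v1}) \ {S.v2} := by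
    ext x
    simp only [Set.mem_diff, Set.mem_singleton_iff]
    constructor
    · rintro ⟨hx, hxT⟩
      exact ⟨⟨hx, fun h => hxT (h ▸ S.v1T)⟩, fun h => hxT (h ▸ S.v2T)⟩
    · rintro ⟨⟨hx, hx1⟩, hx2⟩
      refine ⟨hx, fun hxT => ?_⟩
      rcases (S.hT x).mp hxT with h | h | h
      exacts [hx1 h, hx2 h, hu1v3 (h ▸ hx)]
  have hdiff3 : S.G.neighborSet S.u3 \ S.T = S.G.neighborSet S.u3 \ {S.v3} := by
    ext x
    simp only [Set.mem_diff, Set.mem_singleton_iff]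
    constructor
    · rintro ⟨hx, hxT⟩
      exact ⟨hx, fun h => hxT (h ▸ S.v3T)⟩
    · rintro ⟨hx, hx3⟩
      refine ⟨hx, fun hxT => ?_⟩
      rcases (S.hT x).mp hxT with h | h | h
      exacts [hu3v1 (h ▸ hx), hu3v2 (h ▸ hx), hx3 h]
  have hdegHu : deg (Hdel S.G S.T) S.u1 = deg S.G S.u1 - 2 := by
    rw [deg, hNHu, hdiff, deg]
    rw [Set.ncard_diff_singleton_of_mem (by exact ⟨hv2Nu, fun h => S.ne12 h.symm⟩ :
      S.v2 ∈ S.G.neighborSet S.u1 \ {S.v1})]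
    rw [Set.ncard_diff_singleton_of_mem hv1Nu, Nat.sub_sub]
  have hdegHu3 : deg (Hdel S.G S.T) S.u3 = deg S.G S.u3 - 1 := by
    rw [deg, hNHu3, hdiff3, deg]
    rw [Set.ncard_diff_singleton_of_mem hv3Nu3]
  obtain ⟨A, hA⟩ : ∃ x : Set (Fin 6), x = S.c '' ((Hdel S.G S.T).neighborSet S.u1) := ⟨_, rfl⟩
  obtain ⟨A3, hA3⟩ : ∃ x : Set (Fin 6), x = S.c '' ((Hdel S.G S.T).neighborSet S.u3) := ⟨_, rfl⟩
  have hAcard : min 3 (deg S.G S.u1 - 2) ≤ A.ncard := by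
    have := S.hc S.u1; rw [hdegHu] at this; rwa [← hA] at this
  have hA3card : min 3 (deg S.G S.u3 - 1) ≤ A3.ncard := by
    have := S.hc S.u3; rw [hdegHu3] at this; rwa [← hA3] at this
  obtain ⟨Dstar, hDstar⟩ : ∃ x : Finset (Fin 6), x = if 3 ≤ A.ncard then ∅ else (Set.toFinite A).toFinset := ⟨_, rfl⟩
  obtain ⟨D3, hD3⟩ : ∃ x : Finset (Fin 6),
      x = if min 3 (deg S.G S.u3) ≤ A3.ncard then ∅ else (Set.toFinite A3).toFinset := ⟨_, rfl⟩
  have hDstarc : Dstar.card ≤ 2 := by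
    rw [hDstar]; split_ifs with h
    · simp
    · rw [← Set.ncard_eq_toFinset_card]; exact le2_of_not_le 3 _ le_rfl h
  have hD3c : D3.card ≤ 2 := by
    rw [hD3]; split_ifs with h
    · simp
    · rw [← Set.ncard_eq_toFinset_card]
      exact le2_of_not_le _ _ (min_le_left _ _) h
  obtain ⟨x1, x2, hx12, hx1m, hx2m⟩ := pick2 (Dstar ∪ {z, z3}) (by
    have : ({z, z3} : Finset (Fin 6)).card ≤ 2 := (Finset.card_insert_le _ _).trans (by simp)
    calc (Dstar ∪ {z, z3}).card ≤ Dstar.card + ({z, z3} : Finset (Fin 6)).card :=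
      Finset.card_union_le _ _
    _ ≤ 4 := by omega)
  obtain ⟨x3, hx3m⟩ := pick1 (D3 ∪ {z, x1, x2}) (by
    have : ({z, x1, x2} : Finset (Fin 6)).card ≤ 3 :=
      (Finset.card_insert_le _ _).trans (by
        have := Finset.card_insert_le x1 ({x2} : Finset (Fin 6)); simp at this ⊢; omega)
    calc (D3 ∪ {z, x1, x2}).card ≤ D3.card + ({z, x1, x2} : Finset (Fin 6)).card :=
      Finset.card_union_le _ _
    _ ≤ 5 := by omega)
  simp only [Finset.mem_union, Finset.mem_insert, Finset.mem_singleton, not_or] at hx1m hx2m hx3m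
  obtain ⟨hx1D, hx1z, hx1z3⟩ := hx1m
  obtain ⟨hx2D, hx2z, hx2z3⟩ := hx2m
  obtain ⟨hx3D, hx3z, hx3x1, hx3x2⟩ := hx3m
  set c' : V → Fin 6 :=
    fun w => if w = S.v1 then x1 else if w = S.v2 then x2 else if w = S.v3 then x3 else S.c w
    with hc'
  have ev1 : c' S.v1 = x1 := by simp [hc']
  have ev2 : c' S.v2 = x2 := by simp [hc', S.ne12.symm]
  have ev3 : c' S.v3 = x3 := by simp [hc', S.ne13.symm, S.ne23.symm]
  have evo : ∀ x, x ≠ S.v1 → x ≠ S.v2 → x ≠ S.v3 → c' x = S.c x := by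
    intro x hxa hxb hxc; simp [hc', hxa, hxb, hxc]
  have evT : ∀ x, x ∉ S.T → c' x = S.c x := by
    intro x hx
    exact evo x (fun h => hx (h ▸ S.v1T)) (fun h => hx (h ▸ S.v2T)) (fun h => hx (h ▸ S.v3T))
  have evu1 : c' S.u1 = z := by rw [evT _ S.hu1, hz]
  have evu2 : c' S.u2 = z := by rw [evT _ S.hu2, ← e12, hz]
  have evu3 : c' S.u3 = z3 := by rw [evT _ S.hu3, hz3]
  -- image of the H-neighborhood of u1 resp. u3 is unchanged
  have himgA : c' '' ((Hdel S.G S.T).neighborSet S.u1) = A := by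
    rw [hA]
    apply Set.image_congr
    intro x hx
    rw [hNHu] at hx
    exact evT x hx.2
  have himgA3 : c' '' ((Hdel S.G S.T).neighborSet S.u3) = A3 := by
    rw [hA3]
    apply Set.image_congr
    intro x hx
    rw [hNHu3] at hx
    exact evT x hx.2
  have hsplitu : S.G.neighborSet S.u1 = insert S.v1 (insert S.v2 ((Hdel S.G S.T).neighborSet S.u1)) := by
    rw [hNHu]
    ext x
    simp only [Set.mem_insert_iff, Set.mem_diff]
    constructor
    · intro hx
      by_cases hxT : x ∈ S.T
      · rcases (S.hT x).mp hxT with h | h | h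
        exacts [Or.inl h, Or.inr (Or.inl h), absurd (h ▸ hx) hu1v3]
      · exact Or.inr (Or.inr ⟨hx, hxT⟩)
    · rintro (h | h | h)
      exacts [h ▸ hv1Nu, h ▸ hv2Nu, h.1]
  have hsplitu3 : S.G.neighborSet S.u3 = insert S.v3 ((Hdel S.G S.T).neighborSet S.u3) := by
    rw [hNHu3]
    ext x
    simp only [Set.mem_insert_iff, Set.mem_diff]
    constructor
    · intro hx
      by_cases hxT : x ∈ S.T
      · rcases (S.hT x).mp hxT with h | h | h
        exacts [absurd (h ▸ hx) hu3v1, absurd (h ▸ hx) hu3v2, Or.inl h]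
      · exact Or.inr ⟨hx, hxT⟩
    · rintro (h | h)
      exacts [h ▸ hv3Nu3, h.1]
  refine ⟨c', fun w => ?_⟩
  by_cases hw1 : w = S.v1
  · subst hw1
    rw [S.degv1, S.Nv1, Set.image_insert_eq, Set.image_insert_eq, Set.image_singleton,
      ev2, ev3, evu1, ncard3 (fun h => hx3x2 h.symm) hx2z hx3z]
    simp
  by_cases hw2 : w = S.v2
  · subst hw2
    rw [S.degv2, S.Nv2, Set.image_insert_eq, Set.image_insert_eq, Set.image_singleton,
      ev1, ev3, evu2, ncard3 (fun h => hx3x1 h.symm) hx1z hx3z]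
    simp
  by_cases hw3 : w = S.v3
  · subst hw3
    rw [S.degv3, S.Nv3, Set.image_insert_eq, Set.image_insert_eq, Set.image_singleton,
      ev1, ev2, evu3, ncard3 hx12 hx1z3 hx2z3]
    simp
  by_cases hwu : w = S.u1
  · subst hwu
    rw [hsplitu, Set.image_insert_eq, Set.image_insert_eq, ev1, ev2, himgA]
    by_cases h3A : 3 ≤ A.ncard
    · calc min 3 (deg S.G S.u1) ≤ 3 := min_le_left _ _
      _ ≤ A.ncard := h3A
      _ ≤ (insert x1 (insert x2 A)).ncard := Set.ncard_le_ncard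
        (fun y hy => Set.mem_insert_of_mem _ (Set.mem_insert_of_mem _ hy)) (Set.toFinite _)
    · have hDeq : Dstar = (Set.toFinite A).toFinset := by rw [hDstar, if_neg h3A]
      have hx1A : x1 ∉ A := fun h => hx1D (by rw [hDeq]; exact (Set.Finite.mem_toFinset _).mpr h)
      have hx2A : x2 ∉ A := fun h => hx2D (by rw [hDeq]; exact (Set.Finite.mem_toFinset _).mpr h)
      have hc2 : (insert x2 A).ncard = A.ncard + 1 := Set.ncard_insert_of_notMem hx2A (Set.toFinite _)
      have hc1 : (insert x1 (insert x2 A)).ncard = A.ncard + 2 := by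
        rw [Set.ncard_insert_of_notMem (by
          intro h
          rcases h with h | h
          exacts [hx12 h, hx1A h]) (Set.toFinite _), hc2]
      rw [hc1]
      exact minb2 _ _ hAcard
  by_cases hwu3 : w = S.u3
  · subst hwu3
    rw [hsplitu3, Set.image_insert_eq, ev3, himgA3]
    by_cases h3A : min 3 (deg S.G S.u3) ≤ A3.ncard
    · calc min 3 (deg S.G S.u3) ≤ A3.ncard := h3A
      _ ≤ (insert x3 A3).ncard := Set.ncard_le_ncard (Set.subset_insert _ _) (Set.toFinite _)
    · have hDeq : D3 = (Set.toFinite A3).toFinset := by rw [hD3, if_neg h3A]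
      have hx3A : x3 ∉ A3 := fun h => hx3D (by rw [hDeq]; exact (Set.Finite.mem_toFinset _).mpr h)
      rw [Set.ncard_insert_of_notMem hx3A (Set.toFinite _)]
      exact minb1 _ _ hA3card
  · have hwT : w ∉ S.T := by
      intro h; rcases (S.hT w).mp h with h | h | h
      exacts [hw1 h, hw2 h, hw3 h]
    have hwu2 : w ≠ S.u2 := by rw [← e12]; exact hwu
    have hnb := S.untouched w hwT hwu hwu2 hwu3
    exact transfer S.G S.T S.c c' w hwT hnb (fun x hx => evT x (hnb x hx)) (S.hc w)

end Setup

end WD3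

namespace WD3

lemma pair_image_eq {α : Type*} (c : α → Fin 6) (a b : α) (z r : Fin 6) (hne : z ≠ r)
    (himg : c '' {a, b} = {z, r}) :
    (c a = z ∧ c b = r) ∨ (c a = r ∧ c b = z) := by
  have ha : c a ∈ ({z, r} : Set (Fin 6)) := by
    rw [← himg]; exact Set.mem_image_of_mem c (by simp)
  have hb : c b ∈ ({z, r} : Set (Fin 6)) := by
    rw [← himg]; exact Set.mem_image_of_mem c (by simp)
  have hz : z ∈ c '' ({a, b} : Set α) := by rw [himg]; simp
  have hr : r ∈ c '' ({a, b} : Set α) := by rw [himg]; simp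
  rw [Set.image_insert_eq, Set.image_singleton] at hz hr
  simp only [Set.mem_insert_iff, Set.mem_singleton_iff] at ha hb hz hr
  rcases ha with ha | ha
  · rcases hb with hb | hb
    · rcases hr with hr | hr
      · exact absurd (ha ▸ hr) hne.symm
      · exact absurd (hb ▸ hr) hne.symm
    · exact Or.inl ⟨ha, hb⟩
  · rcases hb with hb | hb
    · exact Or.inr ⟨ha, hb⟩
    · rcases hz with hz | hz
      · exact absurd (hz.trans ha) hne
      · exact absurd (hz.trans hb) hne

lemma min3_le_card3 (m : ℕ) (hm : m ≤ 3) (a b c : Fin 6) (h1 : a ≠ b) (h2 : a ≠ c)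
    (h3 : b ≠ c) : m ≤ ({a, b, c} : Set (Fin 6)).ncard := by
  rw [ncard3 h1 h2 h3]; exact hm

namespace Setup

variable {V : Type} [Fintype V] (S : Setup V)

set_option maxHeartbeats 1000000 in
lemma caseIII (d12 : S.u1 ≠ S.u2) (d13 : S.u1 ≠ S.u3) (d23 : S.u2 ≠ S.u3) :
    WDColorable S.G 3 6 := by
  classical
  -- non-adjacencies
  have hu1v2 : ¬ S.G.Adj S.u1 S.v2 := by
    intro h
    rcases (S.hN2 S.u1).mp h.symm with h' | h' | h'
    exacts [S.u1v1 h', S.u1v3 h', d12 h']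
  have hu1v3 : ¬ S.G.Adj S.u1 S.v3 := by
    intro h
    rcases (S.hN3 S.u1).mp h.symm with h' | h' | h'
    exacts [S.u1v1 h', S.u1v2 h', d13 h']
  have hu2v1 : ¬ S.G.Adj S.u2 S.v1 := by
    intro h
    rcases (S.hN1 S.u2).mp h.symm with h' | h' | h'
    exacts [S.u2v2 h', S.u2v3 h', d12 h'.symm]
  have hu2v3 : ¬ S.G.Adj S.u2 S.v3 := by
    intro h
    rcases (S.hN3 S.u2).mp h.symm with h' | h' | h'
    exacts [S.u2v1 h', S.u2v2 h', d23 h']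
  have hu3v1 : ¬ S.G.Adj S.u3 S.v1 := by
    intro h
    rcases (S.hN1 S.u3).mp h.symm with h' | h' | h'
    exacts [S.u3v2 h', S.u3v3 h', d13 h'.symm]
  have hu3v2 : ¬ S.G.Adj S.u3 S.v2 := by
    intro h
    rcases (S.hN2 S.u3).mp h.symm with h' | h' | h'
    exacts [S.u3v1 h', S.u3v3 h', d23 h'.symm]
  -- H-neighborhoods of the u's
  have hv1Nu : S.v1 ∈ S.G.neighborSet S.u1 := S.adj_v1u1.symm
  have hv2Nu : S.v2 ∈ S.G.neighborSet S.u2 := S.adj_v2u2.symm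
  have hv3Nu : S.v3 ∈ S.G.neighborSet S.u3 := S.adj_v3u3.symm
  have hNH1 : (Hdel S.G S.T).neighborSet S.u1 = S.G.neighborSet S.u1 \ {S.v1} := by
    rw [Hdel_nbr _ _ _ S.hu1]
    ext x
    simp only [Set.mem_diff, Set.mem_singleton_iff]
    constructor
    · rintro ⟨hx, hxT⟩
      exact ⟨hx, fun h => hxT (h ▸ S.v1T)⟩
    · rintro ⟨hx, hx1⟩
      refine ⟨hx, fun hxT => ?_⟩
      rcases (S.hT x).mp hxT with h | h | h
      exacts [hx1 h, hu1v2 (h ▸ hx), hu1v3 (h ▸ hx)]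
  have hNH2 : (Hdel S.G S.T).neighborSet S.u2 = S.G.neighborSet S.u2 \ {S.v2} := by
    rw [Hdel_nbr _ _ _ S.hu2]
    ext x
    simp only [Set.mem_diff, Set.mem_singleton_iff]
    constructor
    · rintro ⟨hx, hxT⟩
      exact ⟨hx, fun h => hxT (h ▸ S.v2T)⟩
    · rintro ⟨hx, hx1⟩
      refine ⟨hx, fun hxT => ?_⟩
      rcases (S.hT x).mp hxT with h | h | h
      exacts [hu2v1 (h ▸ hx), hx1 h, hu2v3 (h ▸ hx)]
  have hNH3 : (Hdel S.G S.T).neighborSet S.u3 = S.G.neighborSet S.u3 \ {S.v3} := by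
    rw [Hdel_nbr _ _ _ S.hu3]
    ext x
    simp only [Set.mem_diff, Set.mem_singleton_iff]
    constructor
    · rintro ⟨hx, hxT⟩
      exact ⟨hx, fun h => hxT (h ▸ S.v3T)⟩
    · rintro ⟨hx, hx1⟩
      refine ⟨hx, fun hxT => ?_⟩
      rcases (S.hT x).mp hxT with h | h | h
      exacts [hu3v1 (h ▸ hx), hu3v2 (h ▸ hx), hx1 h]
  have hdegH1 : deg (Hdel S.G S.T) S.u1 = deg S.G S.u1 - 1 := by
    rw [deg, hNH1, deg, Set.ncard_diff_singleton_of_mem hv1Nu]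
  have hdegH2 : deg (Hdel S.G S.T) S.u2 = deg S.G S.u2 - 1 := by
    rw [deg, hNH2, deg, Set.ncard_diff_singleton_of_mem hv2Nu]
  have hdegH3 : deg (Hdel S.G S.T) S.u3 = deg S.G S.u3 - 1 := by
    rw [deg, hNH3, deg, Set.ncard_diff_singleton_of_mem hv3Nu]
  have hsplit1 : S.G.neighborSet S.u1 = insert S.v1 ((Hdel S.G S.T).neighborSet S.u1) := by
    rw [hNH1, Set.insert_diff_singleton, Set.insert_eq_self.mpr hv1Nu]
  have hsplit2 : S.G.neighborSet S.u2 = insert S.v2 ((Hdel S.G S.T).neighborSet S.u2) := by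
    rw [hNH2, Set.insert_diff_singleton, Set.insert_eq_self.mpr hv2Nu]
  have hsplit3 : S.G.neighborSet S.u3 = insert S.v3 ((Hdel S.G S.T).neighborSet S.u3) := by
    rw [hNH3, Set.insert_diff_singleton, Set.insert_eq_self.mpr hv3Nu]
  obtain ⟨A1, hA1⟩ : ∃ x : Set (Fin 6), x = S.c '' ((Hdel S.G S.T).neighborSet S.u1) := ⟨_, rfl⟩
  obtain ⟨A2, hA2⟩ : ∃ x : Set (Fin 6), x = S.c '' ((Hdel S.G S.T).neighborSet S.u2) := ⟨_, rfl⟩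
  obtain ⟨A3, hA3⟩ : ∃ x : Set (Fin 6), x = S.c '' ((Hdel S.G S.T).neighborSet S.u3) := ⟨_, rfl⟩
  have hA1card : min 3 (deg S.G S.u1 - 1) ≤ A1.ncard := by
    have := S.hc S.u1; rw [hdegH1] at this; rwa [← hA1] at this
  have hA2card : min 3 (deg S.G S.u2 - 1) ≤ A2.ncard := by
    have := S.hc S.u2; rw [hdegH2] at this; rwa [← hA2] at this
  have hA3card : min 3 (deg S.G S.u3 - 1) ≤ A3.ncard := by
    have := S.hc S.u3; rw [hdegH3] at this; rwa [← hA3] at this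
  obtain ⟨D1, hD1⟩ : ∃ x : Finset (Fin 6),
      x = if min 3 (deg S.G S.u1) ≤ A1.ncard then ∅ else (Set.toFinite A1).toFinset := ⟨_, rfl⟩
  obtain ⟨D2, hD2⟩ : ∃ x : Finset (Fin 6),
      x = if min 3 (deg S.G S.u2) ≤ A2.ncard then ∅ else (Set.toFinite A2).toFinset := ⟨_, rfl⟩
  obtain ⟨D3, hD3⟩ : ∃ x : Finset (Fin 6),
      x = if min 3 (deg S.G S.u3) ≤ A3.ncard then ∅ else (Set.toFinite A3).toFinset := ⟨_, rfl⟩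
  have hD1card : D1.card ≤ 2 := by
    rw [hD1]; split_ifs with h
    · simp
    · rw [← Set.ncard_eq_toFinset_card]; exact le2_of_not_le _ _ (min_le_left _ _) h
  have hD2card : D2.card ≤ 2 := by
    rw [hD2]; split_ifs with h
    · simp
    · rw [← Set.ncard_eq_toFinset_card]; exact le2_of_not_le _ _ (min_le_left _ _) h
  have hD3card : D3.card ≤ 2 := by
    rw [hD3]; split_ifs with h
    · simp
    · rw [← Set.ncard_eq_toFinset_card]; exact le2_of_not_le _ _ (min_le_left _ _) h
  rcases sel3 (S.c S.u1) (S.c S.u2) (S.c S.u3) D1 D2 D3 hD1card hD2card hD3card with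
    ⟨x1, x2, x3, hx12, hx13, hx23, hxD1, hxD2, hxD3, hx1z2, hx1z3, hx2z1, hx2z3, hx3z1, hx3z2⟩ |
    ⟨hz12, hz13, hz23, r, hr1, hr2, hr3, hDe1, hDe2, hDe3⟩
  · -- generic case: recolor only the triangle
    set c' : V → Fin 6 :=
      fun w => if w = S.v1 then x1 else if w = S.v2 then x2 else if w = S.v3 then x3 else S.c w
      with hc'
    have ev1 : c' S.v1 = x1 := by simp [hc']
    have ev2 : c' S.v2 = x2 := by simp [hc', S.ne12.symm]
    have ev3 : c' S.v3 = x3 := by simp [hc', S.ne13.symm, S.ne23.symm]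
    have evT : ∀ x, x ∉ S.T → c' x = S.c x := by
      intro x hx
      have h1 : x ≠ S.v1 := fun h => hx (h ▸ S.v1T)
      have h2 : x ≠ S.v2 := fun h => hx (h ▸ S.v2T)
      have h3 : x ≠ S.v3 := fun h => hx (h ▸ S.v3T)
      simp [hc', h1, h2, h3]
    have himg1 : c' '' ((Hdel S.G S.T).neighborSet S.u1) = A1 := by
      rw [hA1]
      apply Set.image_congr
      intro x hx
      rw [Hdel_nbr _ _ _ S.hu1] at hx
      exact evT x hx.2
    have himg2 : c' '' ((Hdel S.G S.T).neighborSet S.u2) = A2 := by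
      rw [hA2]
      apply Set.image_congr
      intro x hx
      rw [Hdel_nbr _ _ _ S.hu2] at hx
      exact evT x hx.2
    have himg3 : c' '' ((Hdel S.G S.T).neighborSet S.u3) = A3 := by
      rw [hA3]
      apply Set.image_congr
      intro x hx
      rw [Hdel_nbr _ _ _ S.hu3] at hx
      exact evT x hx.2
    refine ⟨c', fun w => ?_⟩
    by_cases hw1 : w = S.v1
    · subst hw1
      rw [S.degv1, S.Nv1, Set.image_insert_eq, Set.image_insert_eq, Set.image_singleton,
        ev2, ev3, evT _ S.hu1, ncard3 hx23 hx2z1 hx3z1]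
      simp
    by_cases hw2 : w = S.v2
    · subst hw2
      rw [S.degv2, S.Nv2, Set.image_insert_eq, Set.image_insert_eq, Set.image_singleton,
        ev1, ev3, evT _ S.hu2, ncard3 hx13 hx1z2 hx3z2]
      simp
    by_cases hw3 : w = S.v3
    · subst hw3
      rw [S.degv3, S.Nv3, Set.image_insert_eq, Set.image_insert_eq, Set.image_singleton,
        ev1, ev2, evT _ S.hu3, ncard3 hx12 hx1z3 hx2z3]
      simp
    by_cases hwu1 : w = S.u1
    · subst hwu1
      rw [hsplit1, Set.image_insert_eq, ev1, himg1]
      by_cases hifc : min 3 (deg S.G S.u1) ≤ A1.ncard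
      · exact hifc.trans (Set.ncard_le_ncard (Set.subset_insert _ _) (Set.toFinite _))
      · have : x1 ∉ A1 := by
          intro h
          apply hxD1
          rw [hD1, if_neg hifc]
          exact (Set.Finite.mem_toFinset _).mpr h
        rw [Set.ncard_insert_of_notMem this (Set.toFinite _)]
        exact minb1 _ _ hA1card
    by_cases hwu2 : w = S.u2
    · subst hwu2
      rw [hsplit2, Set.image_insert_eq, ev2, himg2]
      by_cases hifc : min 3 (deg S.G S.u2) ≤ A2.ncard
      · exact hifc.trans (Set.ncard_le_ncard (Set.subset_insert _ _) (Set.toFinite _))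
      · have : x2 ∉ A2 := by
          intro h
          apply hxD2
          rw [hD2, if_neg hifc]
          exact (Set.Finite.mem_toFinset _).mpr h
        rw [Set.ncard_insert_of_notMem this (Set.toFinite _)]
        exact minb1 _ _ hA2card
    by_cases hwu3 : w = S.u3
    · subst hwu3
      rw [hsplit3, Set.image_insert_eq, ev3, himg3]
      by_cases hifc : min 3 (deg S.G S.u3) ≤ A3.ncard
      · exact hifc.trans (Set.ncard_le_ncard (Set.subset_insert _ _) (Set.toFinite _))
      · have : x3 ∉ A3 := by
          intro h
          apply hxD3
          rw [hD3, if_neg hifc]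
          exact (Set.Finite.mem_toFinset _).mpr h
        rw [Set.ncard_insert_of_notMem this (Set.toFinite _)]
        exact minb1 _ _ hA3card
    · have hwT : w ∉ S.T := by
        intro h; rcases (S.hT w).mp h with h | h | h
        exacts [hw1 h, hw2 h, hw3 h]
      have hnb := S.untouched w hwT hwu1 hwu2 hwu3
      exact transfer S.G S.T S.c c' w hwT hnb (fun x hx => evT x (hnb x hx)) (S.hc w)
  · -- blocked case: all three tight with pattern {zᵢ, r}
    -- extract tightness and the exact neighborhoods
    have hpat : ∀ (D : Finset (Fin 6)) (A : Set (Fin 6)) (u : V) (zz : Fin 6),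
        D = (if min 3 (deg S.G u) ≤ A.ncard then ∅ else (Set.toFinite A).toFinset) →
        D = {zz, r} →
        ¬ min 3 (deg S.G u) ≤ A.ncard ∧ A = ({zz, r} : Set (Fin 6)) := by
      intro D A u zz h1 h2
      by_cases hifc : min 3 (deg S.G u) ≤ A.ncard
      · rw [if_pos hifc] at h1
        exact absurd (h1.symm.trans h2).symm (Finset.insert_ne_empty _ _)
      · refine ⟨hifc, ?_⟩
        have h3 := (h1.symm.trans h2)
        rw [if_neg hifc] at h3
        ext x
        rw [← Set.Finite.mem_toFinset (Set.toFinite A), h3]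
        simp
    obtain ⟨hn1, hAeq1⟩ := hpat D1 A1 S.u1 (S.c S.u1) hD1 hDe1
    obtain ⟨hn2, hAeq2⟩ := hpat D2 A2 S.u2 (S.c S.u2) hD2 hDe2
    obtain ⟨hn3, hAeq3⟩ := hpat D3 A3 S.u3 (S.c S.u3) hD3 hDe3
    have hA1two : A1.ncard = 2 := by rw [hAeq1]; exact Set.ncard_pair hr1.symm
    have hA2two : A2.ncard = 2 := by rw [hAeq2]; exact Set.ncard_pair hr2.symm
    have hA3two : A3.ncard = 2 := by rw [hAeq3]; exact Set.ncard_pair hr3.symm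
    have hdeg3 : deg S.G S.u3 = 3 := by
      rw [hA3two] at hn3
      rw [hA3two] at hA3card
      exact deg_eq_3 _ hn3 hA3card
    -- the two other neighbors of u3
    have hNH3card : ((Hdel S.G S.T).neighborSet S.u3).ncard = 2 := by
      have h := hdegH3
      rw [hdeg3] at h
      exact h
    obtain ⟨a3, b3, hab3, hNeq3, hca3, hcb3⟩ :
        ∃ a b, a ≠ b ∧ (Hdel S.G S.T).neighborSet S.u3 = {a, b} ∧
          S.c a = S.c S.u3 ∧ S.c b = r := by
      obtain ⟨a, b, hab, hNeq⟩ := Set.ncard_eq_two.mp hNH3card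
      have himgpair : S.c '' ({a, b} : Set V) = {S.c S.u3, r} := by
        rw [← hNeq, ← hA3, hAeq3]
      rcases pair_image_eq S.c a b _ r hr3.symm himgpair with ⟨h1, h2⟩ | ⟨h1, h2⟩
      · exact ⟨a, b, hab, hNeq, h1, h2⟩
      · exact ⟨b, a, hab.symm, by rw [hNeq, Set.pair_comm], h2, h1⟩
    have ha3mem : a3 ∈ (Hdel S.G S.T).neighborSet S.u3 := by rw [hNeq3]; exact Set.mem_insert _ _
    have hb3mem : b3 ∈ (Hdel S.G S.T).neighborSet S.u3 := by
      rw [hNeq3]; exact Set.mem_insert_of_mem _ rfl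
    have ha3N : a3 ∈ S.G.neighborSet S.u3 := by
      have := ha3mem; rw [Hdel_nbr _ _ _ S.hu3] at this; exact this.1
    have ha3T : a3 ∉ S.T := by
      have := ha3mem; rw [Hdel_nbr _ _ _ S.hu3] at this; exact this.2
    have hb3N : b3 ∈ S.G.neighborSet S.u3 := by
      have := hb3mem; rw [Hdel_nbr _ _ _ S.hu3] at this; exact this.1
    have hb3T : b3 ∉ S.T := by
      have := hb3mem; rw [Hdel_nbr _ _ _ S.hu3] at this; exact this.2
    have ha3u1 : a3 ≠ S.u1 := fun h => hz13 (by rw [← hca3, h])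
    have ha3u2 : a3 ≠ S.u2 := fun h => hz23 (by rw [← hca3, h])
    have ha3u3 : a3 ≠ S.u3 := (S.G.ne_of_adj ha3N).symm
    have hb3u1 : b3 ≠ S.u1 := fun h => hr1 (by rw [← hcb3, h])
    have hb3u2 : b3 ≠ S.u2 := fun h => hr2 (by rw [← hcb3, h])
    have hb3u3 : b3 ≠ S.u3 := (S.G.ne_of_adj hb3N).symm
    have a3nb := S.untouched a3 ha3T ha3u1 ha3u2 ha3u3
    have b3nb := S.untouched b3 hb3T hb3u1 hb3u2 hb3u3
    have hNHa3 : (Hdel S.G S.T).neighborSet a3 = S.G.neighborSet a3 := by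
      rw [Hdel_nbr _ _ _ ha3T]
      ext x
      exact ⟨fun h => h.1, fun h => ⟨h, a3nb x h⟩⟩
    have hNHb3 : (Hdel S.G S.T).neighborSet b3 = S.G.neighborSet b3 := by
      rw [Hdel_nbr _ _ _ hb3T]
      ext x
      exact ⟨fun h => h.1, fun h => ⟨h, b3nb x h⟩⟩
    have hu3Na3 : S.u3 ∈ S.G.neighborSet a3 := SimpleGraph.mem_neighborSet _ _ _ |>.mpr
      ((SimpleGraph.mem_neighborSet _ _ _ |>.mp ha3N).symm)
    have hu3Nb3 : S.u3 ∈ S.G.neighborSet b3 := SimpleGraph.mem_neighborSet _ _ _ |>.mpr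
      ((SimpleGraph.mem_neighborSet _ _ _ |>.mp hb3N).symm)
    have hspa3 : S.G.neighborSet a3 = insert S.u3 (S.G.neighborSet a3 \ {S.u3}) := by
      rw [Set.insert_diff_singleton, Set.insert_eq_self.mpr hu3Na3]
    have hspb3 : S.G.neighborSet b3 = insert S.u3 (S.G.neighborSet b3 \ {S.u3}) := by
      rw [Set.insert_diff_singleton, Set.insert_eq_self.mpr hu3Nb3]
    obtain ⟨Sa, hSa⟩ : ∃ x : Set (Fin 6), x = S.c '' (S.G.neighborSet a3 \ {S.u3}) := ⟨_, rfl⟩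
    obtain ⟨Sb, hSb⟩ : ∃ x : Set (Fin 6), x = S.c '' (S.G.neighborSet b3 \ {S.u3}) := ⟨_, rfl⟩
    have hdega3 : deg (Hdel S.G S.T) a3 = deg S.G a3 := by
      unfold deg; rw [hNHa3]
    have hcA3a : min 3 (deg S.G a3) ≤ (insert (S.c S.u3) Sa).ncard := by
      have h := S.hc a3
      have himg : S.c '' ((Hdel S.G S.T).neighborSet a3) = insert (S.c S.u3) Sa := by
        rw [hNHa3, hspa3, Set.image_insert_eq, ← hSa]
      rw [hdega3, himg] at h
      exact h
    have hdegb3 : deg (Hdel S.G S.T) b3 = deg S.G b3 := by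
      unfold deg; rw [hNHb3]
    have hcA3b : min 3 (deg S.G b3) ≤ (insert (S.c S.u3) Sb).ncard := by
      have h := S.hc b3
      have himg : S.c '' ((Hdel S.G S.T).neighborSet b3) = insert (S.c S.u3) Sb := by
        rw [hNHb3, hspb3, Set.image_insert_eq, ← hSb]
      rw [hdegb3, himg] at h
      exact h
    obtain ⟨Fa, hFa⟩ : ∃ x : Finset (Fin 6),
        x = if min 3 (deg S.G a3) ≤ Sa.ncard then ∅ else (Set.toFinite Sa).toFinset := ⟨_, rfl⟩
    obtain ⟨Fb, hFb⟩ : ∃ x : Finset (Fin 6),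
        x = if min 3 (deg S.G b3) ≤ Sb.ncard then ∅ else (Set.toFinite Sb).toFinset := ⟨_, rfl⟩
    have hFacard : Fa.card ≤ 2 := by
      rw [hFa]; split_ifs with h
      · simp
      · rw [← Set.ncard_eq_toFinset_card]; exact le2_of_not_le _ _ (min_le_left _ _) h
    have hFbcard : Fb.card ≤ 2 := by
      rw [hFb]; split_ifs with h
      · simp
      · rw [← Set.ncard_eq_toFinset_card]; exact le2_of_not_le _ _ (min_le_left _ _) h
    -- choose the new color z3' for u3
    obtain ⟨z3', hz3'W⟩ := pick1 (Fa ∪ Fb ∪ {S.c S.u3}) (by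
      calc (Fa ∪ Fb ∪ {S.c S.u3}).card
          ≤ (Fa ∪ Fb).card + ({S.c S.u3} : Finset (Fin 6)).card := Finset.card_union_le _ _
        _ ≤ Fa.card + Fb.card + 1 := by
            have := Finset.card_union_le Fa Fb
            simp only [Finset.card_singleton]
            omega
        _ ≤ 5 := by omega)
    simp only [Finset.mem_union, Finset.mem_singleton, not_or] at hz3'W
    obtain ⟨⟨hz3'Fa, hz3'Fb⟩, hz3'z3⟩ := hz3'W
    -- choose s and t outside {z1, z2, z3, r}
    obtain ⟨s, t, hst, hsm, htm⟩ := pick2 {S.c S.u1, S.c S.u2, S.c S.u3, r} (by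
      calc ({S.c S.u1, S.c S.u2, S.c S.u3, r} : Finset (Fin 6)).card
          ≤ ({S.c S.u2, S.c S.u3, r} : Finset (Fin 6)).card + 1 := Finset.card_insert_le _ _
        _ ≤ ({S.c S.u3, r} : Finset (Fin 6)).card + 2 := by
            have := Finset.card_insert_le (S.c S.u2) ({S.c S.u3, r} : Finset (Fin 6))
            omega
        _ ≤ 4 := by
            have := Finset.card_insert_le (S.c S.u3) ({r} : Finset (Fin 6))
            simp only [Finset.card_singleton] at this ⊢
            omega)
    simp only [Finset.mem_insert, Finset.mem_singleton, not_or] at hsm htm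
    obtain ⟨hsz1, hsz2, hsz3, hsr⟩ := hsm
    obtain ⟨htz1, htz2, htz3, htr⟩ := htm
    obtain ⟨x2, hx2def⟩ : ∃ x : Fin 6, x = if z3' = s then t else s := ⟨_, rfl⟩
    obtain ⟨x3, hx3def⟩ : ∃ x : Fin 6, x = if z3' = s then s else t := ⟨_, rfl⟩
    have hx2st : x2 = s ∨ x2 = t := by
      rw [hx2def]; split_ifs <;> simp
    have hx3st : x3 = s ∨ x3 = t := by
      rw [hx3def]; split_ifs <;> simp
    have hx23 : x2 ≠ x3 := by
      rw [hx2def, hx3def]; split_ifs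
      · exact hst.symm
      · exact hst
    have hx2z3' : x2 ≠ z3' := by
      rw [hx2def]; split_ifs with h
      · rw [h]; exact hst.symm
      · exact fun hh => h hh.symm
    have hx2z1 : x2 ≠ S.c S.u1 := by rcases hx2st with h | h <;> rw [h]
      <;> [exact hsz1; exact htz1]
    have hx2z2 : x2 ≠ S.c S.u2 := by rcases hx2st with h | h <;> rw [h]
      <;> [exact hsz2; exact htz2]
    have hx2z3 : x2 ≠ S.c S.u3 := by rcases hx2st with h | h <;> rw [h]
      <;> [exact hsz3; exact htz3]
    have hx2r : x2 ≠ r := by rcases hx2st with h | h <;> rw [h]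
      <;> [exact hsr; exact htr]
    have hx3z1 : x3 ≠ S.c S.u1 := by rcases hx3st with h | h <;> rw [h]
      <;> [exact hsz1; exact htz1]
    have hx3z2 : x3 ≠ S.c S.u2 := by rcases hx3st with h | h <;> rw [h]
      <;> [exact hsz2; exact htz2]
    have hx3z3 : x3 ≠ S.c S.u3 := by rcases hx3st with h | h <;> rw [h]
      <;> [exact hsz3; exact htz3]
    have hx3r : x3 ≠ r := by rcases hx3st with h | h <;> rw [h]
      <;> [exact hsr; exact htr]
    -- the recoloring
    set c' : V → Fin 6 :=
      fun w => if w = S.v1 then S.c S.u3 else if w = S.v2 then x2 else if w = S.v3 then x3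
        else if w = S.u3 then z3' else S.c w
      with hc'
    have ev1 : c' S.v1 = S.c S.u3 := by simp [hc']
    have ev2 : c' S.v2 = x2 := by simp [hc', S.ne12.symm]
    have ev3 : c' S.v3 = x3 := by simp [hc', S.ne13.symm, S.ne23.symm]
    have evu3 : c' S.u3 = z3' := by simp [hc', S.u3v1, S.u3v2, S.u3v3]
    have evT2 : ∀ x, x ∉ S.T → x ≠ S.u3 → c' x = S.c x := by
      intro x hx hxu
      have h1 : x ≠ S.v1 := fun h => hx (h ▸ S.v1T)
      have h2 : x ≠ S.v2 := fun h => hx (h ▸ S.v2T)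
      have h3 : x ≠ S.v3 := fun h => hx (h ▸ S.v3T)
      simp [hc', h1, h2, h3, hxu]
    have evu1 : c' S.u1 = S.c S.u1 := evT2 _ S.hu1 d13
    have evu2 : c' S.u2 = S.c S.u2 := evT2 _ S.hu2 d23
    have eva3 : c' a3 = S.c S.u3 := by rw [evT2 _ ha3T ha3u3, hca3]
    have evb3 : c' b3 = r := by rw [evT2 _ hb3T hb3u3, hcb3]
    refine ⟨c', fun w => ?_⟩
    by_cases hw1 : w = S.v1
    · subst hw1
      rw [S.degv1, S.Nv1, Set.image_insert_eq, Set.image_insert_eq, Set.image_singleton,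
        ev2, ev3, evu1, ncard3 hx23 hx2z1 hx3z1]
      simp
    by_cases hw2 : w = S.v2
    · subst hw2
      rw [S.degv2, S.Nv2, Set.image_insert_eq, Set.image_insert_eq, Set.image_singleton,
        ev1, ev3, evu2, ncard3 (fun h => hx3z3 h.symm) hz23.symm hx3z2]
      simp
    by_cases hw3 : w = S.v3
    · subst hw3
      rw [S.degv3, S.Nv3, Set.image_insert_eq, Set.image_insert_eq, Set.image_singleton,
        ev1, ev2, evu3, ncard3 (fun h => hx2z3 h.symm) (fun h => hz3'z3 h.symm) hx2z3']
      simp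
    by_cases hwu1 : w = S.u1
    · subst hwu1
      have hnou3 : ∀ x ∈ (Hdel S.G S.T).neighborSet S.u1, x ≠ S.u3 := by
        intro x hx hxe
        have : S.c S.u3 ∈ A1 := by
          rw [hA1]; exact ⟨x, hx, by rw [hxe]⟩
        rw [hAeq1] at this
        rcases this with h | h
        · exact hz13 h.symm
        · exact hr3 h.symm
      have himg : c' '' ((Hdel S.G S.T).neighborSet S.u1) = A1 := by
        rw [hA1]
        apply Set.image_congr
        intro x hx
        have hxT : x ∉ S.T := by
          rw [Hdel_nbr _ _ _ S.hu1] at hx; exact hx.2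
        exact evT2 x hxT (hnou3 x hx)
      rw [hsplit1, Set.image_insert_eq, ev1, himg, hAeq1]
      exact min3_le_card3 _ (min_le_left _ _) _ _ _ hz13.symm hr3.symm hr1.symm
    by_cases hwu2 : w = S.u2
    · subst hwu2
      have hnou3 : ∀ x ∈ (Hdel S.G S.T).neighborSet S.u2, x ≠ S.u3 := by
        intro x hx hxe
        have : S.c S.u3 ∈ A2 := by
          rw [hA2]; exact ⟨x, hx, by rw [hxe]⟩
        rw [hAeq2] at this
        rcases this with h | h
        · exact hz23 h.symm
        · exact hr3 h.symm
      have himg : c' '' ((Hdel S.G S.T).neighborSet S.u2) = A2 := by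
        rw [hA2]
        apply Set.image_congr
        intro x hx
        have hxT : x ∉ S.T := by
          rw [Hdel_nbr _ _ _ S.hu2] at hx; exact hx.2
        exact evT2 x hxT (hnou3 x hx)
      rw [hsplit2, Set.image_insert_eq, ev2, himg, hAeq2]
      exact min3_le_card3 _ (min_le_left _ _) _ _ _ hx2z2 hx2r hr2.symm
    by_cases hwu3 : w = S.u3
    · subst hwu3
      have himg : c' '' ((Hdel S.G S.T).neighborSet S.u3) = {S.c S.u3, r} := by
        rw [hNeq3, Set.image_insert_eq, Set.image_singleton, eva3, evb3]
      rw [hsplit3, Set.image_insert_eq, ev3, himg]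
      exact min3_le_card3 _ (min_le_left _ _) _ _ _ hx3z3 hx3r hr3.symm
    by_cases hwa3 : w = a3
    · rw [hwa3]
      have himg : c' '' (S.G.neighborSet a3) = insert z3' Sa := by
        rw [hspa3, Set.image_insert_eq, evu3, hSa]
        congr 1
        apply Set.image_congr
        intro x hx
        exact evT2 x (a3nb x hx.1) hx.2
      rw [himg]
      by_cases hifc : min 3 (deg S.G a3) ≤ Sa.ncard
      · exact hifc.trans (Set.ncard_le_ncard (Set.subset_insert _ _) (Set.toFinite _))
      · have hz3'Sa : z3' ∉ Sa := by
          intro h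
          apply hz3'Fa
          rw [hFa, if_neg hifc]
          exact (Set.Finite.mem_toFinset _).mpr h
        rw [Set.ncard_insert_of_notMem hz3'Sa (Set.toFinite _)]
        exact le_trans hcA3a (Set.ncard_insert_le _ _)
    by_cases hwb3 : w = b3
    · rw [hwb3]
      have himg : c' '' (S.G.neighborSet b3) = insert z3' Sb := by
        rw [hspb3, Set.image_insert_eq, evu3, hSb]
        congr 1
        apply Set.image_congr
        intro x hx
        exact evT2 x (b3nb x hx.1) hx.2
      rw [himg]
      by_cases hifc : min 3 (deg S.G b3) ≤ Sb.ncard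
      · exact hifc.trans (Set.ncard_le_ncard (Set.subset_insert _ _) (Set.toFinite _))
      · have hz3'Sb : z3' ∉ Sb := by
          intro h
          apply hz3'Fb
          rw [hFb, if_neg hifc]
          exact (Set.Finite.mem_toFinset _).mpr h
        rw [Set.ncard_insert_of_notMem hz3'Sb (Set.toFinite _)]
        exact le_trans hcA3b (Set.ncard_insert_le _ _)
    · -- untouched vertex
      have hwT : w ∉ S.T := by
        intro h; rcases (S.hT w).mp h with h | h | h
        exacts [hw1 h, hw2 h, hw3 h]
      have hnb := S.untouched w hwT hwu1 hwu2 hwu3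
      refine transfer S.G S.T S.c c' w hwT hnb (fun x hx => ?_) (S.hc w)
      have hxT := hnb x hx
      have hxu3 : x ≠ S.u3 := by
        intro hxe
        have hwN : w ∈ S.G.neighborSet S.u3 := by
          rw [SimpleGraph.mem_neighborSet] at hx ⊢
          exact (hxe ▸ hx).symm
        rw [hsplit3, hNeq3] at hwN
        rcases hwN with h | h | h
        · exact hw3 h
        · exact hwa3 h
        · exact hwb3 h
      exact evT2 x hxT hxu3

end Setup

end WD3

namespace WD3

lemma third_nbr {V : Type} [Fintype V] (G : SimpleGraph V) (a b c : V) (hab : G.Adj a b) (hac : G.Adj a c)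
    (hbc : b ≠ c) (hdeg : deg G a = 3) :
    ∃ u, u ≠ b ∧ u ≠ c ∧ u ≠ a ∧ (∀ w, G.Adj a w ↔ (w = b ∨ w = c ∨ w = u)) := by
  have hsub : ({b, c} : Set V) ⊆ G.neighborSet a := by
    intro x hx
    rcases hx with h | h
    · exact h ▸ hab
    · exact (Set.mem_singleton_iff.mp h) ▸ hac
  have hnotsub : ¬ G.neighborSet a ⊆ ({b, c} : Set V) := by
    intro h
    have := Set.ncard_le_ncard h (Set.toFinite _)
    rw [Set.ncard_pair hbc] at this
    rw [deg] at hdeg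
    omega
  obtain ⟨u, huN, hubc⟩ := Set.not_subset.mp hnotsub
  have hub : u ≠ b := fun h => hubc (h ▸ Set.mem_insert _ _)
  have huc : u ≠ c := fun h => hubc (h ▸ Set.mem_insert_of_mem _ rfl)
  have hsub3 : ({b, c, u} : Set V) ⊆ G.neighborSet a := by
    intro x hx
    rcases hx with h | h | h
    · exact h ▸ hab
    · exact h ▸ hac
    · exact (Set.mem_singleton_iff.mp h) ▸ huN
  have heq : ({b, c, u} : Set V) = G.neighborSet a := by
    apply Set.eq_of_subset_of_ncard_le hsub3 _ (Set.toFinite _)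
    rw [deg] at hdeg
    rw [hdeg, ncard3 hbc hub.symm huc.symm]
  refine ⟨u, hub, huc, (G.ne_of_adj huN).symm, fun w => ?_⟩
  constructor
  · intro h
    have : w ∈ ({b, c, u} : Set V) := heq ▸ (h : w ∈ G.neighborSet a)
    simpa using this
  · intro h
    have : w ∈ ({b, c, u} : Set V) := by simpa using h
    exact (heq ▸ this : w ∈ G.neighborSet a)

end WD3

open WD3

/-- A minimal counterexample contains no triangle all of whose vertices have degree 3. -/
theorem minCounterexample_no_deg3_triangle {V : Type} [Fintype V] (G : SimpleGraph V)
    (hplanar : IsPlanar G) (hcex : ¬ WDColorable G 3 6)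
    (hminEdges : ∀ (W : Type) [Fintype W] (H : SimpleGraph W),
      IsPlanar H → H.edgeSet.ncard < G.edgeSet.ncard → WDColorable H 3 6)
    (hminVerts : ∀ (W : Type) [Fintype W] (H : SimpleGraph W),
      IsPlanar H → ¬ WDColorable H 3 6 → H.edgeSet.ncard = G.edgeSet.ncard →
      Nat.card V ≤ Nat.card W) :
    ¬ ∃ v₁ v₂ v₃ : V,
      G.Adj v₁ v₂ ∧ G.Adj v₂ v₃ ∧ G.Adj v₁ v₃ ∧
      deg G v₁ = 3 ∧ deg G v₂ = 3 ∧ deg G v₃ = 3 := by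

  rintro ⟨v1, v2, v3, h12, h23, h13, hd1, hd2, hd3⟩
  classical
  obtain ⟨u1, hu1v2, hu1v3, hu1v1, hN1⟩ := third_nbr G v1 v2 v3 h12 h13 h23.ne hd1
  obtain ⟨u2, hu2v1, hu2v3, hu2v2, hN2⟩ := third_nbr G v2 v1 v3 h12.symm h23 h13.ne hd2
  obtain ⟨u3, hu3v1, hu3v2, hu3v3, hN3⟩ := third_nbr G v3 v1 v2 h13.symm h23.symm h12.ne hd3
  set T : Set V := {v1, v2, v3} with hTdef
  have hT : ∀ x, x ∈ T ↔ (x = v1 ∨ x = v2 ∨ x = v3) := by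
    intro x; rw [hTdef]; simp
  have hu1T : u1 ∉ T := by
    rw [hTdef]; simp only [Set.mem_insert_iff, Set.mem_singleton_iff, not_or]
    exact ⟨hu1v1, hu1v2, hu1v3⟩
  have hu2T : u2 ∉ T := by
    rw [hTdef]; simp only [Set.mem_insert_iff, Set.mem_singleton_iff, not_or]
    exact ⟨hu2v1, hu2v2, hu2v3⟩
  have hu3T : u3 ∉ T := by
    rw [hTdef]; simp only [Set.mem_insert_iff, Set.mem_singleton_iff, not_or]
    exact ⟨hu3v1, hu3v2, hu3v3⟩
  have hplanarH : IsPlanar (Hdel G T) := isPlanar_mono (Hdel_le G T) hplanar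
  have hlt : (Hdel G T).edgeSet.ncard < G.edgeSet.ncard :=
    Hdel_edge_lt G T h12 ((hT v1).mpr (Or.inl rfl))
  obtain ⟨c, hc⟩ := hminEdges V (Hdel G T) hplanarH hlt
  set S : Setup V :=
    { G := G, T := T, c := c, v1 := v1, v2 := v2, v3 := v3, u1 := u1, u2 := u2, u3 := u3,
      hT := hT, hN1 := hN1, hN2 := hN2, hN3 := hN3,
      h12 := h12, h13 := h13, h23 := h23,
      hu1 := hu1T, hu2 := hu2T, hu3 := hu3T, hc := hc } with hSdef
  have hcol : WDColorable G 3 6 := by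
    by_cases e12 : u1 = u2
    · by_cases e23 : u2 = u3
      · exact S.caseI e12 e23
      · exact S.caseII e12 (fun h => e23 (e12.symm.trans h))
    · by_cases e23 : u2 = u3
      · exact S.rot.caseII e23 (fun h => e12 ((h : u2 = u1)).symm)
      · by_cases e13 : u1 = u3
        · exact S.swap23.caseII e13 e12
        · exact S.caseIII e12 e13 e23
  exact hcex hcol
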